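/- arXiv:2009.01995 — 6 statements merged into one kernel-verified Lean document; each statement's English description precedes it below -/
import Mathlib

section
/- Let Y be a real-valued random variable, D a random variable taking values in a finite ordered set 𝒟 with maximum d_max, and Z a random variable with values in {z_1,...,z_K}. Suppose there exist potential outcomes Y_d (d ∈ 𝒟) and potential treatments D_{z_k} (k = 1,...,K) such that (i) Y = Y_d on the event {D = d}, and D = D_{z_k} on {Z = z_k}; (ii) Z is jointly independent of (Y_{d_1},...,Y_{d_J}, D_{z_1},...,D_{z_K}); (iii) D_{z_{k+1}} ≥ D_{z_k} almost surely for all k. Then for every Borel set B ⊆ ℝ and every k with 1 ≤ k ≤ K−1, P(Y ∈ B, D = d_max | Z = z_k) ≤ P(Y ∈ B, D = d_max | Z = z_{k+1}). -/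
open MeasureTheory ProbabilityTheory

/-- Testable implication of IV validity for a multivalued ordered treatment:
the conditional probability of `{Y ∈ B, D = d_max}` is nondecreasing in the
instrument level. -/
theorem stmt0
    {Ω : Type*} [MeasurableSpace Ω] (μ : Measure Ω) [IsProbabilityMeasure μ]
    (K : ℕ) (hK : 2 ≤ K)
    (𝒟 : Finset ℝ) (dmax : ℝ) (hdmax_mem : dmax ∈ 𝒟) (hdmax : ∀ d ∈ 𝒟, d ≤ dmax)
    (Y D : Ω → ℝ) (Z : Ω → Fin K)
    (Yd : ℝ → Ω → ℝ) (Dz : Fin K → Ω → ℝ)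
    (hYmeas : Measurable Y) (hDmeas : Measurable D) (hZmeas : Measurable Z)
    (hYdmeas : ∀ d, Measurable (Yd d)) (hDzmeas : ∀ k, Measurable (Dz k))
    (hDrange : ∀ k ω, Dz k ω ∈ 𝒟)
    -- instrument exclusion: Y = Y_d on the event {D = d}
    (hexcl : ∀ ω, Y ω = Yd (D ω) ω)
    -- potential treatments: D = D_{z_k} on the event {Z = z_k}
    (hDz : ∀ ω, D ω = Dz (Z ω) ω)
    -- random assignment: Z is jointly independent of all potential outcomes/treatments
    (hindep : IndepFun Z
      (fun ω => ((fun d : ℝ => Yd d ω), (fun k : Fin K => Dz k ω))) μ)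
    -- instrument monotonicity
    (hmono : ∀ (k : Fin K) (hk : (k : ℕ) + 1 < K),
      ∀ᵐ ω ∂μ, Dz k ω ≤ Dz ⟨(k : ℕ) + 1, hk⟩ ω)
    -- every instrument level has positive probability
    (hpos : ∀ k : Fin K, 0 < μ (Z ⁻¹' {k}))
    (B : Set ℝ) (hB : MeasurableSet B)
    (k : Fin K) (hk : (k : ℕ) + 1 < K) :
    μ[|Z ⁻¹' {k}] {ω | Y ω ∈ B ∧ D ω = dmax}
      ≤ μ[|Z ⁻¹' {(⟨(k : ℕ) + 1, hk⟩ : Fin K)}] {ω | Y ω ∈ B ∧ D ω = dmax} := by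
  classical
  set k' : Fin K := ⟨(k : ℕ) + 1, hk⟩ with hk'
  set f : Ω → (ℝ → ℝ) × (Fin K → ℝ) :=
    fun ω => ((fun d : ℝ => Yd d ω), (fun j : Fin K => Dz j ω)) with hf
  set S : Fin K → Set ((ℝ → ℝ) × (Fin K → ℝ)) :=
    fun j => {p | p.1 dmax ∈ B ∧ p.2 j = dmax} with hS
  have hSmeas : ∀ j, MeasurableSet (S j) := by
    intro j
    have h1 : MeasurableSet {p : (ℝ → ℝ) × (Fin K → ℝ) | p.1 dmax ∈ B} :=
      ((measurable_pi_apply dmax).comp measurable_fst) hB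
    have h2 : MeasurableSet {p : (ℝ → ℝ) × (Fin K → ℝ) | p.2 j = dmax} := by
      have : Measurable fun p : (ℝ → ℝ) × (Fin K → ℝ) => p.2 j :=
        (measurable_pi_apply j).comp measurable_snd
      exact this (measurableSet_singleton dmax)
    exact h1.inter h2
  -- the key identity: conditional probability equals μ (f ⁻¹' S j)
  have key : ∀ j : Fin K,
      μ[|Z ⁻¹' {j}] {ω | Y ω ∈ B ∧ D ω = dmax} = μ (f ⁻¹' S j) := by
    intro j
    have hZset : MeasurableSet (Z ⁻¹' {j}) := hZmeas (measurableSet_singleton j)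
    have hsect : Z ⁻¹' {j} ∩ {ω | Y ω ∈ B ∧ D ω = dmax}
        = Z ⁻¹' {j} ∩ f ⁻¹' S j := by
      ext ω
      simp only [Set.mem_inter_iff, Set.mem_preimage, Set.mem_singleton_iff,
        Set.mem_setOf_eq, hf, hS]
      constructor
      · rintro ⟨hz, hYB, hD⟩
        refine ⟨hz, ?_, ?_⟩
        · rw [← hD, ← hexcl ω]; exact hYB
        · rw [← hz, ← hDz ω]; exact hD
      · rintro ⟨hz, hYB, hD⟩
        have hDω : D ω = dmax := by rw [hDz ω, hz]; exact hD
        refine ⟨hz, ?_, hDω⟩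
        rw [hexcl ω, hDω]; exact hYB
    have hmul : μ (Z ⁻¹' {j} ∩ f ⁻¹' S j) = μ (Z ⁻¹' {j}) * μ (f ⁻¹' S j) :=
      hindep.measure_inter_preimage_eq_mul {j} (S j)
        (measurableSet_singleton j) (hSmeas j)
    rw [cond_apply hZset, hsect, hmul, ← mul_assoc,
      ENNReal.inv_mul_cancel (hpos j).ne' (measure_ne_top μ _), one_mul]
  rw [key k, key k']
  -- monotonicity: f ⁻¹' S k ⊆ f ⁻¹' S k' a.e.
  refine measure_mono_ae ?_
  filter_upwards [hmono k hk] with ω hω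
  rintro ⟨hYB, hD⟩
  refine ⟨hYB, le_antisymm (hdmax _ (hDrange k' ω)) ?_⟩
  calc dmax = Dz k ω := hD.symm
    _ ≤ Dz k' ω := hω
end

section
/- Under the same setup as the previous statement but with d_min the minimum value of 𝒟, for every Borel set B ⊆ ℝ and every k with 1 ≤ k ≤ K−1, P(Y ∈ B, D = d_min | Z = z_k) ≥ P(Y ∈ B, D = d_min | Z = z_{k+1}). -/
open MeasureTheory ProbabilityTheory

/-- Testable implication of IV validity for a multivalued ordered treatment:
the conditional probability of `{Y ∈ B, D = d_min}` is nonincreasing in the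
instrument level. -/
theorem stmt1
    {Ω : Type*} [MeasurableSpace Ω] (μ : Measure Ω) [IsProbabilityMeasure μ]
    (K : ℕ) (hK : 2 ≤ K)
    (𝒟 : Finset ℝ) (dmin : ℝ) (hdmin_mem : dmin ∈ 𝒟) (hdmin : ∀ d ∈ 𝒟, dmin ≤ d)
    (Y D : Ω → ℝ) (Z : Ω → Fin K)
    (Yd : ℝ → Ω → ℝ) (Dz : Fin K → Ω → ℝ)
    (hYmeas : Measurable Y) (hDmeas : Measurable D) (hZmeas : Measurable Z)
    (hYdmeas : ∀ d, Measurable (Yd d)) (hDzmeas : ∀ k, Measurable (Dz k))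
    (hDrange : ∀ k ω, Dz k ω ∈ 𝒟)
    -- instrument exclusion: Y = Y_d on the event {D = d}
    (hexcl : ∀ ω, Y ω = Yd (D ω) ω)
    -- potential treatments: D = D_{z_k} on the event {Z = z_k}
    (hDz : ∀ ω, D ω = Dz (Z ω) ω)
    -- random assignment: Z is jointly independent of all potential outcomes/treatments
    (hindep : IndepFun Z
      (fun ω => ((fun d : ℝ => Yd d ω), (fun k : Fin K => Dz k ω))) μ)
    -- instrument monotonicity
    (hmono : ∀ (k : Fin K) (hk : (k : ℕ) + 1 < K),
      ∀ᵐ ω ∂μ, Dz k ω ≤ Dz ⟨(k : ℕ) + 1, hk⟩ ω)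
    -- every instrument level has positive probability
    (hpos : ∀ k : Fin K, 0 < μ (Z ⁻¹' {k}))
    (B : Set ℝ) (hB : MeasurableSet B)
    (k : Fin K) (hk : (k : ℕ) + 1 < K) :
    μ[|Z ⁻¹' {(⟨(k : ℕ) + 1, hk⟩ : Fin K)}] {ω | Y ω ∈ B ∧ D ω = dmin}
      ≤ μ[|Z ⁻¹' {k}] {ω | Y ω ∈ B ∧ D ω = dmin} := by
  -- For each level j, the conditional probability equals μ (A j) where
  -- A j = {ω | Yd dmin ω ∈ B ∧ Dz j ω = dmin}.
  set A : Fin K → Set Ω := fun j => {ω | Yd dmin ω ∈ B ∧ Dz j ω = dmin} with hA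
  have hcond : ∀ j : Fin K, μ[|Z ⁻¹' {j}] {ω | Y ω ∈ B ∧ D ω = dmin} = μ (A j) := by
    intro j
    have hZs : MeasurableSet (Z ⁻¹' {j}) := hZmeas (measurableSet_singleton j)
    rw [ProbabilityTheory.cond_apply hZs]
    have hset : Z ⁻¹' {j} ∩ {ω | Y ω ∈ B ∧ D ω = dmin} = Z ⁻¹' {j} ∩ A j := by
      ext ω
      simp only [Set.mem_inter_iff, Set.mem_preimage, Set.mem_singleton_iff, Set.mem_setOf_eq, hA]
      constructor
      · rintro ⟨hz, hy, hd⟩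
        refine ⟨hz, ?_, ?_⟩
        · rw [← hd, ← hexcl ω]; exact hy
        · rw [← hz, ← hDz ω]; exact hd
      · rintro ⟨hz, hy, hd⟩
        have hDω : D ω = dmin := by rw [hDz ω, hz]; exact hd
        exact ⟨hz, by rw [hexcl ω, hDω]; exact hy, hDω⟩
    rw [hset]
    -- independence
    have hS : MeasurableSet {p : (ℝ → ℝ) × (Fin K → ℝ) | p.1 dmin ∈ B ∧ p.2 j = dmin} := by
      have h1 : Measurable fun p : (ℝ → ℝ) × (Fin K → ℝ) => p.1 dmin :=
        (measurable_pi_apply dmin).comp measurable_fst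
      have h2 : Measurable fun p : (ℝ → ℝ) × (Fin K → ℝ) => p.2 j :=
        (measurable_pi_apply j).comp measurable_snd
      exact (h1 hB).inter (h2 (measurableSet_singleton dmin))
    have key := hindep.measure_inter_preimage_eq_mul {j}
      {p : (ℝ → ℝ) × (Fin K → ℝ) | p.1 dmin ∈ B ∧ p.2 j = dmin}
      (measurableSet_singleton j) hS
    have : (fun ω => ((fun d : ℝ => Yd d ω), (fun i : Fin K => Dz i ω))) ⁻¹'
        {p : (ℝ → ℝ) × (Fin K → ℝ) | p.1 dmin ∈ B ∧ p.2 j = dmin} = A j := rfl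
    rw [this] at key
    rw [key, ← mul_assoc, ENNReal.inv_mul_cancel (hpos j).ne' (measure_ne_top μ _), one_mul]
  rw [hcond, hcond]
  -- monotonicity: A (k+1) ⊆ A k a.e.
  refine measure_mono_ae ?_
  filter_upwards [hmono k hk] with ω hω
  rintro ⟨hy, hd⟩
  refine ⟨hy, le_antisymm ?_ (hdmin _ (hDrange k ω))⟩
  rw [← hd]; exact hω
end

section
/- Suppose for each d ∈ 𝒟 and z, z' ∈ 𝒵 there are potential outcomes Y_{dz} with Y_{dz} = Y_{dz'} a.s. (so define Y_d = Y_{dz}), Z is jointly independent of all potential outcomes and potential treatments D_z, and 1{D_{z'} = d} ≤ 1{D_z = d} almost surely for a given triple (d, z, z'). Then for every Borel set B, ℙ(Y ∈ B, D = d | Z = z') ≤ ℙ(Y ∈ B, D = d | Z = z). -/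
open MeasureTheory ProbabilityTheory

/-- Testable implication of IV validity for an unordered treatment:
if `1{D_{z'} = d} ≤ 1{D_z = d}` almost surely for the triple `(d, z, z')`,
then `P(Y ∈ B, D = d | Z = z') ≤ P(Y ∈ B, D = d | Z = z)`. -/
theorem stmt3
    {Ω : Type*} [MeasurableSpace Ω] (μ : Measure Ω) [IsProbabilityMeasure μ]
    {α : Type*} [Fintype α] [MeasurableSpace α] [MeasurableSingletonClass α]
    {ι : Type*} [MeasurableSpace ι] [MeasurableSingletonClass ι]
    (Y : Ω → ℝ) (D : Ω → α) (Z : Ω → ι)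
    (Yd : α → Ω → ℝ) (Dz : ι → Ω → α)
    (hYmeas : Measurable Y) (hDmeas : Measurable D) (hZmeas : Measurable Z)
    (hYdmeas : ∀ d, Measurable (Yd d)) (hDzmeas : ∀ z, Measurable (Dz z))
    -- instrument exclusion: Y = Y_d on the event {D = d}
    (hexcl : ∀ ω, Y ω = Yd (D ω) ω)
    -- potential treatments: D = D_z on the event {Z = z}
    (hDz : ∀ ω, D ω = Dz (Z ω) ω)
    -- random assignment: Z is jointly independent of all potential outcomes/treatments
    (hindep : IndepFun Z
      (fun ω => ((fun d : α => Yd d ω), (fun z : ι => Dz z ω))) μ)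
    (d : α) (z z' : ι)
    (hposz : 0 < μ (Z ⁻¹' {z})) (hposz' : 0 < μ (Z ⁻¹' {z'}))
    -- unordered monotonicity for the triple (d, z, z'): 1{D_{z'} = d} ≤ 1{D_z = d} a.s.
    (hmono : ∀ᵐ ω ∂μ, Dz z' ω = d → Dz z ω = d)
    (B : Set ℝ) (hB : MeasurableSet B) :
    μ[|Z ⁻¹' {z'}] {ω | Y ω ∈ B ∧ D ω = d}
      ≤ μ[|Z ⁻¹' {z}] {ω | Y ω ∈ B ∧ D ω = d} := by
  -- independence of Z and (Yd d, Dz w) for any w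
  have hind : ∀ w : ι, IndepFun Z (fun ω => (Yd d ω, Dz w ω)) μ := by
    intro w
    have hφ : Measurable (fun p : (α → ℝ) × (ι → α) => (p.1 d, p.2 w)) :=
      ((measurable_pi_apply d).comp measurable_fst).prodMk
        ((measurable_pi_apply w).comp measurable_snd)
    exact hindep.comp measurable_id hφ
  -- key formula for conditional probability
  have key : ∀ w : ι, 0 < μ (Z ⁻¹' {w}) →
      μ[|Z ⁻¹' {w}] {ω | Y ω ∈ B ∧ D ω = d}
        = μ {ω | Yd d ω ∈ B ∧ Dz w ω = d} := by
    intro w hpos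
    have hZw : MeasurableSet (Z ⁻¹' {w}) := hZmeas (measurableSet_singleton w)
    rw [cond_apply hZw]
    have hset : Z ⁻¹' {w} ∩ {ω | Y ω ∈ B ∧ D ω = d}
        = Z ⁻¹' {w} ∩ {ω | Yd d ω ∈ B ∧ Dz w ω = d} := by
      ext ω
      simp only [Set.mem_inter_iff, Set.mem_preimage, Set.mem_singleton_iff,
        Set.mem_setOf_eq]
      constructor
      · rintro ⟨hw, hYB, hDd⟩
        refine ⟨hw, ?_, ?_⟩
        · rw [← hDd]; rw [← hexcl ω]; exact hYB
        · rw [← hDd, hDz ω, hw]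
      · rintro ⟨hw, hYB, hDd⟩
        have hD : D ω = d := by rw [hDz ω, hw, hDd]
        refine ⟨hw, ?_, hD⟩
        rw [hexcl ω, hD]; exact hYB
    rw [hset]
    have hprod : {ω | Yd d ω ∈ B ∧ Dz w ω = d}
        = (fun ω => (Yd d ω, Dz w ω)) ⁻¹' (B ×ˢ {d}) := by
      ext ω
      simp only [Set.mem_preimage, Set.mem_prod, Set.mem_singleton_iff, Set.mem_setOf_eq]
    have := (hind w).measure_inter_preimage_eq_mul {w} (B ×ˢ {d})
      (measurableSet_singleton w) (hB.prod (measurableSet_singleton d))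
    rw [hprod, this, ← mul_assoc, ENNReal.inv_mul_cancel hpos.ne'
      (measure_ne_top μ _), one_mul]
  rw [key z' hposz', key z hposz]
  apply measure_mono_ae
  filter_upwards [hmono] with ω h hω
  exact ⟨hω.1, h hω.2⟩
end

section
/- Let Q be a probability measure on ℝ³ and let 𝓗_{1d} = {(−1)^d·1_{B×{d}×ℝ} : B a closed interval in ℝ} for fixed d ∈ {0,1}. Then the closure of 𝓗_{1d} in L²(Q) is contained in 𝓗̄_{1d} = {(−1)^d·1_{B×{d}×ℝ} : B a closed, open, or half-closed interval in ℝ}; i.e., every L²(Q)-limit of a sequence in 𝓗_{1d} equals (−1)^d·1_{B×{d}×ℝ} Q-a.e. for some interval B. -/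
open MeasureTheory Filter

/-- The function `(-1)^d · 1_{B × {d} × ℝ}` for a set `B ⊆ ℝ`. -/
noncomputable def H1funSet (B : Set ℝ) (d : Fin 2) : ℝ × ℝ × ℝ → ℝ :=
  fun p => (-1 : ℝ) ^ (d : ℕ) *
    Set.indicator (B ×ˢ ({((d : ℕ) : ℝ)} ×ˢ (Set.univ : Set ℝ)))
      (fun _ => (1 : ℝ)) p

lemma H1funSet_measurable (B : Set ℝ) (hB : MeasurableSet B) (d : Fin 2) :
    Measurable (H1funSet B d) := by
  apply Measurable.const_mul
  exact Measurable.indicator measurable_const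
    (hB.prod ((measurableSet_singleton _).prod MeasurableSet.univ))

lemma H1funSet_apply_mem (B : Set ℝ) (d : Fin 2) (p : ℝ × ℝ × ℝ)
    (h1 : p.1 ∈ B) (h2 : p.2.1 = ((d : ℕ) : ℝ)) :
    H1funSet B d p = (-1 : ℝ) ^ (d : ℕ) := by
  have : p ∈ B ×ˢ (({((d : ℕ) : ℝ)} : Set ℝ) ×ˢ (Set.univ : Set ℝ)) :=
    ⟨h1, h2, trivial⟩
  simp only [H1funSet, Set.indicator_of_mem this, mul_one]

lemma H1funSet_apply_not_mem (B : Set ℝ) (d : Fin 2) (p : ℝ × ℝ × ℝ)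
    (h : p.1 ∉ B ∨ p.2.1 ≠ ((d : ℕ) : ℝ)) :
    H1funSet B d p = 0 := by
  have : p ∉ B ×ˢ (({((d : ℕ) : ℝ)} : Set ℝ) ×ˢ (Set.univ : Set ℝ)) := by
    rintro ⟨h1, h2, -⟩
    rcases h with h | h
    · exact h h1
    · exact h h2
  simp only [H1funSet, Set.indicator_of_notMem this, mul_zero]

lemma H1funSet_bound (B : Set ℝ) (d : Fin 2) (p : ℝ × ℝ × ℝ) :
    ‖H1funSet B d p‖ ≤ 1 := by
  unfold H1funSet
  rw [norm_mul]
  have h1 : ‖(-1 : ℝ) ^ (d : ℕ)‖ = 1 := by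
    rw [norm_pow]; simp
  rw [h1, one_mul]
  by_cases h : p ∈ B ×ˢ (({((d : ℕ) : ℝ)} : Set ℝ) ×ˢ (Set.univ : Set ℝ))
  · rw [Set.indicator_of_mem h]; norm_num
  · rw [Set.indicator_of_notMem h]; norm_num

/-- Every `L²(Q)`-limit of a sequence of functions
`(-1)^d · 1_{[aₙ,bₙ]×{d}×ℝ}` (closed intervals) is `Q`-a.e. equal to
`(-1)^d · 1_{B×{d}×ℝ}` for some interval `B` (closed, open, or half-closed,
i.e. an order-connected subset of `ℝ`). -/
theorem stmt8
    (d : Fin 2) (Q : Measure (ℝ × ℝ × ℝ)) [IsProbabilityMeasure Q]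
    (a b : ℕ → ℝ) (hab : ∀ n, a n ≤ b n)
    (f : ℝ × ℝ × ℝ → ℝ) (hf : Measurable f) (hf2 : MemLp f 2 Q)
    (hconv : Tendsto
      (fun n => ∫ p, (H1funSet (Set.Icc (a n) (b n)) d p - f p) ^ 2 ∂Q)
      atTop (nhds 0)) :
    ∃ B : Set ℝ, B.OrdConnected ∧ MeasurableSet B ∧
      f =ᵐ[Q] H1funSet B d := by
  set h : ℕ → ℝ × ℝ × ℝ → ℝ := fun n => H1funSet (Set.Icc (a n) (b n)) d with hh
  have hmeas : ∀ n, Measurable (h n) := fun n =>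
    H1funSet_measurable _ measurableSet_Icc d
  have hmem : ∀ n, MemLp (h n) 2 Q := fun n =>
    MemLp.of_bound (hmeas n).aestronglyMeasurable 1
      (Eventually.of_forall (H1funSet_bound _ d))
  have hsubmem : ∀ n, MemLp (h n - f) 2 Q := fun n => (hmem n).sub hf2
  -- eLpNorm convergence
  have heLp : Tendsto (fun n => eLpNorm (h n - f) 2 Q) atTop (nhds 0) := by
    have heq : ∀ n, eLpNorm (h n - f) 2 Q
        = ENNReal.ofReal ((∫ p, (h n p - f p) ^ 2 ∂Q) ^ ((2 : ℝ)⁻¹)) := by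
      intro n
      rw [(hsubmem n).eLpNorm_eq_integral_rpow_norm (by norm_num) (by norm_num)]
      congr 1
      have : (2 : ENNReal).toReal = 2 := by norm_num
      rw [this]
      congr 1
      apply integral_congr_ae
      filter_upwards with p
      simp [Pi.sub_apply, sq_abs, Real.norm_eq_abs]
    simp_rw [heq]
    have : Tendsto (fun n => ((∫ p, (h n p - f p) ^ 2 ∂Q) ^ ((2 : ℝ)⁻¹)))
        atTop (nhds 0) := by
      have := hconv.rpow_const (p := (2 : ℝ)⁻¹) (Or.inr (by norm_num))
      simpa using this
    have := (ENNReal.continuous_ofReal.tendsto 0).comp this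
    simpa [Function.comp_def] using this
  have htim : TendstoInMeasure Q h atTop f :=
    tendstoInMeasure_of_tendsto_eLpNorm (by norm_num)
      (fun n => (hmeas n).aestronglyMeasurable) hf.aestronglyMeasurable heLp
  obtain ⟨ns, hns, hae⟩ := htim.exists_seq_tendsto_ae
  -- the limit interval
  set C : ℕ → Set ℝ := fun j => ⋂ k, ⋂ (_ : j ≤ k), Set.Icc (a (ns k)) (b (ns k))
    with hC
  have hCord : ∀ j, (C j).OrdConnected :=
    fun j => Set.ordConnected_iInter fun k =>
      Set.ordConnected_iInter fun _ => Set.ordConnected_Icc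
  have hCmono : Monotone C := by
    intro i j hij x hx
    simp only [hC, Set.mem_iInter] at hx ⊢
    exact fun k hk => hx k (hij.trans hk)
  refine ⟨⋃ j, C j, ?_, ?_, ?_⟩
  · constructor
    intro x hx y hy
    simp only [Set.mem_iUnion] at hx hy
    obtain ⟨i, hi⟩ := hx
    obtain ⟨j, hj⟩ := hy
    have hxC : x ∈ C (max i j) := hCmono (le_max_left i j) hi
    have hyC : y ∈ C (max i j) := hCmono (le_max_right i j) hj
    exact ((hCord (max i j)).out hxC hyC).trans
      (Set.subset_iUnion C (max i j))
  · exact MeasurableSet.iUnion fun j =>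
      MeasurableSet.iInter fun k => MeasurableSet.iInter fun _ => measurableSet_Icc
  · filter_upwards [hae] with p hp
    set B := ⋃ j, C j with hB
    by_cases hd : p.2.1 = ((d : ℕ) : ℝ)
    · by_cases hev : ∀ᶠ k in atTop, p.1 ∈ Set.Icc (a (ns k)) (b (ns k))
      · -- eventually inside: f p = (-1)^d and p.1 ∈ B
        have hconst : ∀ᶠ k in atTop, h (ns k) p = (-1 : ℝ) ^ (d : ℕ) := by
          filter_upwards [hev] with k hk
          exact H1funSet_apply_mem _ d p hk hd
        have hfp : f p = (-1 : ℝ) ^ (d : ℕ) :=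
          tendsto_nhds_unique hp ((Filter.tendsto_congr' hconst).mpr tendsto_const_nhds)
        obtain ⟨j, hj⟩ := eventually_atTop.mp hev
        have hpB : p.1 ∈ B := by
          refine Set.mem_iUnion.mpr ⟨j, ?_⟩
          simp only [hC, Set.mem_iInter]
          exact hj
        rw [hfp, H1funSet_apply_mem B d p hpB hd]
      · -- frequently outside: f p = 0 and p.1 ∉ B
        have hfreq : ∃ᶠ k in atTop, p.1 ∉ Set.Icc (a (ns k)) (b (ns k)) := by
          rwa [Filter.not_eventually] at hev
        obtain ⟨φ, hφ, hφ0⟩ := extraction_of_frequently_atTop hfreq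
        have hzero : ∀ k, h (ns (φ k)) p = 0 := fun k =>
          H1funSet_apply_not_mem _ d p (Or.inl (hφ0 k))
        have hfp : f p = 0 := by
          have h1 : Tendsto (fun k => h (ns (φ k)) p) atTop (nhds (f p)) :=
            hp.comp hφ.tendsto_atTop
          have h2 : Tendsto (fun k => h (ns (φ k)) p) atTop (nhds 0) := by
            simpa [hzero] using (tendsto_const_nhds : Tendsto (fun _ : ℕ => (0:ℝ)) atTop (nhds 0))
          exact tendsto_nhds_unique h1 h2
        have hpB : p.1 ∉ B := by
          intro hmem
          obtain ⟨j, hj⟩ := Set.mem_iUnion.mp hmem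
          simp only [hC, Set.mem_iInter] at hj
          obtain ⟨k, hk1, hk2⟩ := (hfreq.and_eventually (eventually_ge_atTop j)).exists
          exact hk1 (hj k hk2)
        rw [hfp, H1funSet_apply_not_mem B d p (Or.inl hpB)]
    · have hzero : ∀ k, h (ns k) p = 0 := fun k =>
        H1funSet_apply_not_mem _ d p (Or.inr hd)
      have hfp : f p = 0 := by
        have h2 : Tendsto (fun k => h (ns k) p) atTop (nhds 0) := by
          simpa [hzero] using (tendsto_const_nhds : Tendsto (fun _ : ℕ => (0:ℝ)) atTop (nhds 0))
        exact tendsto_nhds_unique hp h2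
      rw [hfp, H1funSet_apply_not_mem B d p (Or.inr hd)]
end

section
/- Let (𝔻,d) and (𝔼,e) be metric spaces, 𝔻₀ ⊆ 𝔻, and let X_n : Ω → 𝔻 be maps converging in outer probability to a Borel measurable, separable X taking values in 𝔻₀. Let 𝔻_n ⊆ 𝔻 with X_n(ω) ∈ 𝔻_n for all ω, n, and let g_n be random maps g_n(ω): 𝔻_n → 𝔼 such that: for every ε > 0 there is a measurable A ⊆ Ω with ℙ(A) ≥ 1−ε such that whenever x_n → x with x_n ∈ 𝔻_n and x ∈ 𝔻₀, sup_{ω∈A} e(g_n(ω)(x_n), g(x)) → 0, for a fixed map g: 𝔻₀ → 𝔼. Then g is continuous on 𝔻₀ ∩ 𝔻_∞ (where 𝔻_∞ is the set of limits of sequences x_n ∈ 𝔻_n), and g_n(X_n) converges to g(X) in outer probability. -/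
open MeasureTheory Filter Topology
open scoped ENNReal NNReal

private lemma interleave_aux {𝔻 : Type*} [MetricSpace 𝔻] (Dn : ℕ → Set 𝔻)
    (xs : ℕ → 𝔻) (hxs : ∀ n, xs n ∈ Dn n) (x : 𝔻) (hx : Tendsto xs atTop (𝓝 x))
    (m : ℕ → ℕ) (hm : StrictMono m) (y : ℕ → 𝔻) (hy : ∀ i, y i ∈ Dn (m i))
    (hyx : Tendsto y atTop (𝓝 x)) :
    ∃ w : ℕ → 𝔻, (∀ n, w n ∈ Dn n) ∧ Tendsto w atTop (𝓝 x) ∧ ∀ i, w (m i) = y i := by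
  classical
  refine ⟨fun n => if h : ∃ i, m i = n then y h.choose else xs n, ?_, ?_, ?_⟩
  · intro n
    by_cases h : ∃ i, m i = n
    · simp only [dif_pos h]
      have hDeq : Dn (m h.choose) = Dn n := congrArg Dn h.choose_spec
      rw [← hDeq]
      exact hy _
    · simp only [dif_neg h]; exact hxs n
  · rw [Metric.tendsto_atTop] at hx hyx ⊢
    intro δ hδ
    obtain ⟨N1, hN1⟩ := hx δ hδ
    obtain ⟨I, hI⟩ := hyx δ hδ
    refine ⟨max N1 (m I), fun n hn => ?_⟩
    by_cases h : ∃ i, m i = n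
    · simp only [dif_pos h]
      have hspec := h.choose_spec
      have hIle : I ≤ h.choose := by
        have : m I ≤ m h.choose := by rw [hspec]; exact le_trans (le_max_right _ _) hn
        exact hm.le_iff_le.mp this
      exact hI _ hIle
    · simp only [dif_neg h]
      exact hN1 n (le_trans (le_max_left _ _) hn)
  · intro i
    have h : ∃ j, m j = m i := ⟨i, rfl⟩
    simp only [dif_pos h]
    congr 1
    exact hm.injective h.choose_spec

private lemma key_cont {Ω 𝔻 𝔼 : Type*} [MetricSpace 𝔻] [MetricSpace 𝔼]
    (D0 : Set 𝔻) (Dn : ℕ → Set 𝔻) (gn : ℕ → Ω → 𝔻 → 𝔼) (g : 𝔻 → 𝔼)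
    (A : Set Ω) (hAne : A.Nonempty)
    (hAprop : ∀ (xseq : ℕ → 𝔻) (x₀ : 𝔻), (∀ n, xseq n ∈ Dn n) →
        Tendsto xseq atTop (𝓝 x₀) → x₀ ∈ D0 →
        ∀ δ > (0 : ℝ), ∀ᶠ n in atTop, ∀ ω ∈ A, dist (gn n ω (xseq n)) (g x₀) < δ)
    (x : 𝔻) (hxD0 : x ∈ D0)
    (xs : ℕ → 𝔻) (hxs : ∀ n, xs n ∈ Dn n) (hxsx : Tendsto xs atTop (𝓝 x))
    (v : ℕ → 𝔻) (hv0 : ∀ i, v i ∈ D0)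
    (hvD : ∀ i, ∃ vs : ℕ → 𝔻, (∀ n, vs n ∈ Dn n) ∧ Tendsto vs atTop (𝓝 (v i)))
    (hvx : Tendsto v atTop (𝓝 x)) :
    Tendsto (fun i => g (v i)) atTop (𝓝 (g x)) := by
  obtain ⟨ω₀, hω₀⟩ := hAne
  choose vs hvs1 hvs2 using hvD
  have hE : ∀ i, ∀ᶠ n in atTop,
      dist (vs i n) (v i) < 1 / (i + 1) ∧
      ∀ ω ∈ A, dist (gn n ω (vs i n)) (g (v i)) < 1 / (i + 1) := by
    intro i
    have h1 : (0:ℝ) < 1 / (i + 1) := by positivity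
    obtain ⟨N, hN⟩ := (Metric.tendsto_atTop.mp (hvs2 i)) (1 / (i+1)) h1
    have h3 := hAprop (vs i) (v i) (hvs1 i) (hvs2 i) (hv0 i) (1/(i+1)) h1
    filter_upwards [h3, eventually_ge_atTop N] with n hn1 hn2
    exact ⟨hN n hn2, hn1⟩
  obtain ⟨m, hmmono, hmspec⟩ := Filter.extraction_forall_of_eventually hE
  have hy : ∀ i, vs i (m i) ∈ Dn (m i) := fun i => hvs1 i (m i)
  have hfrac : ∀ K i : ℕ, K ≤ i → (1:ℝ) / (i+1) ≤ 1 / (K+1) := by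
    intro K i hKi
    apply one_div_le_one_div_of_le (by positivity)
    have : (K:ℝ) ≤ i := by exact_mod_cast hKi
    linarith
  have hyx : Tendsto (fun i => vs i (m i)) atTop (𝓝 x) := by
    rw [Metric.tendsto_atTop]
    intro δ hδ
    obtain ⟨K1, hK1⟩ := Metric.tendsto_atTop.mp hvx (δ/2) (by linarith)
    obtain ⟨K2, hK2⟩ := exists_nat_one_div_lt (show (0:ℝ) < δ/2 by linarith)
    refine ⟨max K1 K2, fun i hi => ?_⟩
    have h1 := (hmspec i).1
    have h2 : (1:ℝ) / (i+1) ≤ 1 / (K2+1) := hfrac _ _ (le_trans (le_max_right _ _) hi)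
    calc dist (vs i (m i)) x ≤ dist (vs i (m i)) (v i) + dist (v i) x := dist_triangle _ _ _
      _ < 1/(K2+1) + δ/2 := by
          have := hK1 i (le_trans (le_max_left _ _) hi)
          have := lt_of_lt_of_le h1 h2
          linarith
      _ < δ/2 + δ/2 := by linarith
      _ = δ := by ring
  obtain ⟨w, hw1, hw2, hw3⟩ := interleave_aux Dn xs hxs x hxsx m hmmono _ hy hyx
  rw [Metric.tendsto_atTop]
  intro δ hδ
  obtain ⟨N, hN⟩ := eventually_atTop.mp (hAprop w x hw1 hw2 hxD0 (δ/2) (by linarith))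
  obtain ⟨K2, hK2⟩ := exists_nat_one_div_lt (show (0:ℝ) < δ/2 by linarith)
  refine ⟨max N K2, fun i hi => ?_⟩
  have hmiN : N ≤ m i := le_trans (le_trans (le_max_left _ _) hi) (hmmono.le_apply)
  have hb1 : dist (gn (m i) ω₀ (w (m i))) (g x) < δ/2 := hN (m i) hmiN _ hω₀
  rw [hw3 i] at hb1
  have hb2 : dist (gn (m i) ω₀ (vs i (m i))) (g (v i)) < 1/(i+1) := (hmspec i).2 _ hω₀
  have h2 : (1:ℝ) / (i+1) ≤ 1 / (K2+1) := hfrac _ _ (le_trans (le_max_right _ _) hi)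
  calc dist (g (v i)) (g x)
      ≤ dist (g (v i)) (gn (m i) ω₀ (vs i (m i))) + dist (gn (m i) ω₀ (vs i (m i))) (g x) :=
        dist_triangle _ _ _
    _ < 1/(K2+1) + δ/2 := by rw [dist_comm (g (v i))]; linarith [lt_of_lt_of_le hb2 h2]
    _ < δ/2 + δ/2 := by linarith
    _ = δ := by ring

private lemma loc_pos {Ω : Type*} [MeasurableSpace Ω] (μ : Measure Ω) [IsProbabilityMeasure μ]
    {𝔻 : Type*} [MetricSpace 𝔻]
    (Dn : ℕ → Set 𝔻) (X : Ω → 𝔻) (Xn : ℕ → Ω → 𝔻) (hXn : ∀ n ω, Xn n ω ∈ Dn n)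
    (hconv : ∀ ε > (0 : ℝ), Tendsto (fun n => μ {ω | ε ≤ dist (Xn n ω) (X ω)}) atTop (𝓝 0))
    (x : 𝔻) (hx : ∀ r > (0:ℝ), 0 < μ (X ⁻¹' Metric.ball x r)) :
    ∃ xs : ℕ → 𝔻, (∀ n, xs n ∈ Dn n) ∧ Tendsto xs atTop (𝓝 x) := by
  have hΩ : Nonempty Ω := by
    by_contra h
    rw [not_nonempty_iff] at h
    have h1 : μ Set.univ = 1 := measure_univ
    rw [Set.univ_eq_empty_iff.mpr h, measure_empty] at h1
    exact zero_ne_one h1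
  obtain ⟨ω₁⟩ := hΩ
  have hne : ∀ n, (Dn n).Nonempty := fun n => ⟨Xn n ω₁, hXn n ω₁⟩
  have step : ∀ k : ℕ, ∀ᶠ n in atTop, Metric.infDist x (Dn n) < 2 / (k+1) := by
    intro k
    have hr : (0:ℝ) < 1/(k+1) := by positivity
    have hball := hx (1/(k+1)) hr
    filter_upwards [(hconv (1/(k+1)) hr).eventually_lt_const hball] with n hn
    have hnsub : ¬ (X ⁻¹' Metric.ball x (1/(k+1)) ⊆ {ω | 1/(k+1) ≤ dist (Xn n ω) (X ω)}) :=
      fun hsub => absurd (measure_mono hsub) (not_le.mpr hn)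
    obtain ⟨ω, hω1, hω2⟩ := Set.not_subset.mp hnsub
    have hd1 : dist x (X ω) < 1/(k+1) := by
      rw [dist_comm]; exact Metric.mem_ball.mp hω1
    have hd2 : dist (X ω) (Xn n ω) < 1/(k+1) := by
      rw [dist_comm]; exact not_le.mp hω2
    calc Metric.infDist x (Dn n) ≤ dist x (Xn n ω) :=
          Metric.infDist_le_dist_of_mem (hXn n ω)
      _ ≤ dist x (X ω) + dist (X ω) (Xn n ω) := dist_triangle _ _ _
      _ < 1/(k+1) + 1/(k+1) := by linarith
      _ = 2/(k+1) := by ring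
  have htend : Tendsto (fun n => Metric.infDist x (Dn n)) atTop (𝓝 0) := by
    refine tendsto_order.2 ⟨fun a ha => ?_, fun a ha => ?_⟩
    · exact Eventually.of_forall fun n => lt_of_lt_of_le ha Metric.infDist_nonneg
    · obtain ⟨k, hk⟩ := exists_nat_gt (2/a)
      have hk2 : (2:ℝ)/(k+1) < a := by
        rw [div_lt_iff₀ (by positivity)]
        have h4 : 2/a < (k:ℝ)+1 := by linarith
        calc (2:ℝ) = a * (2/a) := by field_simp
          _ < a * ((k:ℝ)+1) := by exact mul_lt_mul_of_pos_left h4 ha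
      filter_upwards [step k] with n hn
      exact lt_trans hn hk2
  have hch : ∀ n : ℕ, ∃ z ∈ Dn n, dist x z < Metric.infDist x (Dn n) + 1/(n+1) := by
    intro n
    refine (Metric.infDist_lt_iff (hne n)).mp ?_
    have : (0:ℝ) < 1/(n+1) := by positivity
    linarith
  choose z hz1 hz2 using hch
  refine ⟨z, hz1, ?_⟩
  have hsq : Tendsto (fun n => Metric.infDist x (Dn n) + 1/((n:ℝ)+1)) atTop (𝓝 0) := by
    have := htend.add tendsto_one_div_add_atTop_nhds_zero_nat
    simpa using this
  have hd := squeeze_zero (fun n => dist_nonneg (x := z n) (y := x))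
    (fun n => by rw [dist_comm]; exact le_of_lt (hz2 n)) hsq
  exact tendsto_iff_dist_tendsto_zero.mpr hd

private lemma frac_anti {K i : ℕ} (hKi : K ≤ i) : (1:ℝ)/(i+1) ≤ 1/(K+1) := by
  apply one_div_le_one_div_of_le (by positivity)
  have : (K:ℝ) ≤ i := by exact_mod_cast hKi
  linarith

/-- Extended continuous mapping theorem (convergence in outer probability),
for random maps `gₙ(ω) : 𝔻ₙ → 𝔼` converging almost uniformly to a fixed map
`g : 𝔻₀ → 𝔼` along convergent sequences: the limit `g` is continuous on
`𝔻₀ ∩ 𝔻_∞`, and if `Xₙ → X` in outer probability then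
`gₙ(Xₙ) → g(X)` in outer probability.  (In Mathlib a measure applied to an
arbitrary set is its outer measure, so `μ s` is the outer probability.) -/
theorem stmt10
    {Ω : Type*} [MeasurableSpace Ω] (μ : Measure Ω) [IsProbabilityMeasure μ]
    {𝔻 𝔼 : Type*} [MetricSpace 𝔻] [MetricSpace 𝔼]
    [MeasurableSpace 𝔻] [BorelSpace 𝔻]
    (D0 : Set 𝔻) (Dn : ℕ → Set 𝔻)
    (X : Ω → 𝔻) (hX : Measurable X)
    (hXsep : TopologicalSpace.IsSeparable (Set.range X))
    (hXD0 : ∀ ω, X ω ∈ D0)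
    (Xn : ℕ → Ω → 𝔻) (hXn : ∀ n ω, Xn n ω ∈ Dn n)
    -- Xₙ → X in outer probability
    (hconv : ∀ ε > (0 : ℝ),
      Tendsto (fun n => μ {ω | ε ≤ dist (Xn n ω) (X ω)}) atTop (𝓝 0))
    (gn : ℕ → Ω → 𝔻 → 𝔼) (g : 𝔻 → 𝔼)
    -- almost uniform convergence of the random maps gₙ along convergent sequences
    (hg : ∀ ε > (0 : ℝ), ∃ A : Set Ω, MeasurableSet A ∧
      1 - ENNReal.ofReal ε ≤ μ A ∧
      ∀ (x : ℕ → 𝔻) (x₀ : 𝔻), (∀ n, x n ∈ Dn n) →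
        Tendsto x atTop (𝓝 x₀) → x₀ ∈ D0 →
        ∀ δ > (0 : ℝ), ∀ᶠ n in atTop, ∀ ω ∈ A, dist (gn n ω (x n)) (g x₀) < δ) :
    ContinuousOn g (D0 ∩
      {x | ∃ xs : ℕ → 𝔻, (∀ n, xs n ∈ Dn n) ∧ Tendsto xs atTop (𝓝 x)}) ∧
    ∀ ε > (0 : ℝ),
      Tendsto (fun n => μ {ω | ε ≤ dist (gn n ω (Xn n ω)) (g (X ω))}) atTop (𝓝 0) := by
  classical
  set Dinf : Set 𝔻 := {x | ∃ xs : ℕ → 𝔻, (∀ n, xs n ∈ Dn n) ∧ Tendsto xs atTop (𝓝 x)}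
    with hDinf
  -- a nonempty `A` always exists
  have hAnonempty : ∀ (A : Set Ω), MeasurableSet A → 1 - ENNReal.ofReal (1/3 : ℝ) ≤ μ A →
      A.Nonempty := by
    intro A hAm hAμ
    apply nonempty_of_measure_ne_zero (μ := μ)
    intro h0
    rw [h0] at hAμ
    have h1 : (1:ℝ≥0∞) ≤ ENNReal.ofReal (1/3 : ℝ) :=
      tsub_eq_zero_iff_le.mp (le_antisymm hAμ (zero_le))
    have h2 : ENNReal.ofReal (1/3 : ℝ) < 1 := ENNReal.ofReal_lt_one.mpr (by norm_num)
    exact absurd h1 (not_le.mpr h2)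
  -- Part (i): continuity
  have hcont : ContinuousOn g (D0 ∩ Dinf) := by
    obtain ⟨A, hAm, hAμ, hAprop⟩ := hg (1/3) (by norm_num)
    have hAne : A.Nonempty := hAnonempty A hAm hAμ
    intro x hx
    obtain ⟨hxD0, xs, hxs, hxsx⟩ := hx
    rw [ContinuousWithinAt, tendsto_iff_seq_tendsto]
    intro u hu
    rw [tendsto_nhdsWithin_iff] at hu
    obtain ⟨hu1, hu2⟩ := hu
    obtain ⟨K, hK⟩ := eventually_atTop.mp hu2
    have hv0 : ∀ i, u (i + K) ∈ D0 := fun i => (hK (i+K) (by omega)).1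
    have hvD : ∀ i, ∃ vs : ℕ → 𝔻, (∀ n, vs n ∈ Dn n) ∧ Tendsto vs atTop (𝓝 (u (i+K))) :=
      fun i => (hK (i+K) (by omega)).2
    have hvx : Tendsto (fun i => u (i + K)) atTop (𝓝 x) :=
      hu1.comp (tendsto_add_atTop_nat K)
    have h := key_cont D0 Dn gn g A hAne hAprop x hxD0 xs hxs hxsx _ hv0 hvD hvx
    exact (tendsto_add_atTop_iff_nat K).mp h
  refine ⟨hcont, ?_⟩
  intro ε hε
  rw [ENNReal.tendsto_nhds_zero]
  intro η hη
  -- the small quantity `a`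
  set a : ℝ≥0∞ := min (η/3) 3⁻¹ with ha
  have ha0 : 0 < a := lt_min (ENNReal.div_pos hη.ne' (by norm_num)) (by norm_num)
  have haη : a ≤ η/3 := min_le_left _ _
  have ha3 : a ≤ 3⁻¹ := min_le_right _ _
  have hatop : a ≠ ⊤ := (lt_of_le_of_lt ha3 (by norm_num : (3:ℝ≥0∞)⁻¹ < ⊤)).ne
  have hεA0 : 0 < a.toReal := ENNReal.toReal_pos ha0.ne' hatop
  have hofReal : ENNReal.ofReal a.toReal = a := ENNReal.ofReal_toReal hatop
  obtain ⟨A, hAm, hAμ, hAprop⟩ := hg a.toReal hεA0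
  have hAc : μ Aᶜ ≤ a := by
    rw [prob_compl_eq_one_sub hAm]
    calc (1:ℝ≥0∞) - μ A ≤ 1 - (1 - ENNReal.ofReal a.toReal) := tsub_le_tsub_left hAμ 1
      _ ≤ ENNReal.ofReal a.toReal := tsub_tsub_le
      _ = a := hofReal
  have hAne : A.Nonempty := by
    apply hAnonempty A hAm
    refine le_trans (tsub_le_tsub_left ?_ 1) hAμ
    rw [hofReal]
    calc a ≤ 3⁻¹ := ha3
      _ ≤ ENNReal.ofReal (1/3 : ℝ) := by
          rw [ENNReal.ofReal_div_of_pos (by norm_num)]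
          simp [ENNReal.ofReal_one]
  -- pushforward measure
  set ν : Measure 𝔻 := μ.map X with hν
  have hνprob : IsProbabilityMeasure ν := Measure.isProbabilityMeasure_map hX.aemeasurable
  set T : Set 𝔻 := closure (Set.range X) with hT
  have hTm : MeasurableSet T := isClosed_closure.measurableSet
  have hXT : ∀ ω, X ω ∈ T := fun ω => subset_closure ⟨ω, rfl⟩
  have hνT : ν Tᶜ = 0 := by
    rw [hν, Measure.map_apply hX hTm.compl]
    have : X ⁻¹' Tᶜ = ∅ := by
      ext ω; simp only [Set.mem_preimage, Set.mem_compl_iff, Set.mem_empty_iff_false,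
        iff_false, not_not]
      exact hXT ω
    rw [this, measure_empty]
  -- the bad sets
  set B : ℕ → Set 𝔻 := fun k => {p | p ∈ D0 ∧ ∃ m, k ≤ m ∧ ∃ z ∈ Dn m,
      dist z p < 1/(k+1) ∧ ∃ ω ∈ A, ε ≤ dist (gn m ω z) (g p)} with hB
  have hBanti : Antitone B := by
    intro k k' hkk' p hp
    obtain ⟨hp0, m, hm, z, hz, hzd, ω, hωA, hωd⟩ := hp
    exact ⟨hp0, m, le_trans hkk' hm, z, hz, lt_of_lt_of_le hzd (frac_anti hkk'), ω, hωA, hωd⟩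
  set H : ℕ → Set 𝔻 := fun k => toMeasurable ν (B k ∩ T) with hH
  have hHm : ∀ k, MeasurableSet (H k) := fun k => measurableSet_toMeasurable _ _
  have hBH : ∀ j k, j ≤ k → B k ∩ T ⊆ H j := fun j k hjk =>
    subset_trans (Set.inter_subset_inter_left _ (hBanti hjk)) (subset_toMeasurable _ _)
  set H' : ℕ → Set 𝔻 := fun k => ⋂ j ∈ Set.Iic k, H j with hH'
  have hH'm : ∀ k, MeasurableSet (H' k) :=
    fun k => MeasurableSet.biInter (Set.to_countable _) (fun j _ => hHm j)
  have hH'anti : Antitone H' := by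
    intro k k' hkk' p hp
    exact Set.mem_iInter₂.mpr fun j hj =>
      Set.mem_iInter₂.mp hp j (le_trans (Set.mem_Iic.mp hj) hkk' |> Set.mem_Iic.mpr) 
  set Z : Set 𝔻 := ⋂ k, H k with hZ
  have hZm : MeasurableSet Z := MeasurableSet.iInter hHm
  have hZH' : (⋂ k, H' k) = Z := by
    ext p
    simp only [Set.mem_iInter, hZ]
    constructor
    · intro h k
      exact Set.mem_iInter₂.mp (h k) k (Set.mem_Iic.mpr le_rfl)
    · intro h k
      exact Set.mem_iInter₂.mpr fun j _ => h j
  have hZsub : ∀ k, Z ⊆ H k := fun k => Set.iInter_subset _ k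
  -- the key claim : ν Z = 0
  have hZ0 : ν Z = 0 := by
    by_contra hZ0
    have hZpos : 0 < ν Z := zero_lt_iff.mpr hZ0
    set Zt : Set 𝔻 := Z ∩ T with hZt
    have hZtm : MeasurableSet Zt := hZm.inter hTm
    have hZtpos : 0 < ν Zt := by
      have h1 : ν Z ≤ ν Zt + ν (Z \ T) := measure_le_inter_add_diff ν Z T
      have h2 : ν (Z \ T) = 0 := measure_mono_null (Set.diff_subset_compl _ _) hνT
      rw [h2, add_zero] at h1
      exact lt_of_lt_of_le hZpos h1
    obtain ⟨c, hc_count, hc_sub⟩ := hXsep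
    have hTc : T ⊆ closure c := closure_minimal hc_sub isClosed_closure
    set NB : Set (𝔻 × ℚ) := {p | p.1 ∈ c ∧ 0 < ((p.2 : ℝ)) ∧
        ν (Zt ∩ Metric.ball p.1 (p.2 : ℝ)) = 0} with hNB
    have hNBc : NB.Countable :=
      Set.Countable.mono (fun p hp => Set.mem_prod.mpr ⟨hp.1, Set.mem_univ _⟩)
        (hc_count.prod (Set.countable_univ))
    set U : Set 𝔻 := ⋃ p ∈ NB, Metric.ball p.1 (p.2 : ℝ) with hU
    have hUm : MeasurableSet U := MeasurableSet.biUnion hNBc fun p _ => measurableSet_ball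
    have hZtU : ν (Zt ∩ U) = 0 := by
      have hss : Zt ∩ U ⊆ ⋃ p ∈ NB, (Zt ∩ Metric.ball p.1 (p.2 : ℝ)) := by
        intro q hq
        obtain ⟨hq1, hq2⟩ := hq
        obtain ⟨p, hp, hqp⟩ := Set.mem_iUnion₂.mp hq2
        exact Set.mem_iUnion₂.mpr ⟨p, hp, hq1, hqp⟩
      exact measure_mono_null hss ((measure_biUnion_null_iff hNBc).mpr fun p hp => hp.2.2)
    set Z' : Set 𝔻 := Zt \ U with hZ'
    have hZ'm : MeasurableSet Z' := hZtm.diff hUm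
    have hZ'pos : 0 < ν Z' := by
      have h1 : ν Zt ≤ ν (Zt ∩ U) + ν (Zt \ U) := measure_le_inter_add_diff ν Zt U
      rw [hZtU, zero_add] at h1
      exact lt_of_lt_of_le hZtpos h1
    have hloc : ∀ p ∈ Z', ∀ r > (0:ℝ), 0 < ν (Zt ∩ Metric.ball p r) := by
      intro p hp r hr
      by_contra h0
      have h0' : ν (Zt ∩ Metric.ball p r) = 0 := by
        rw [← nonpos_iff_eq_zero]; exact le_of_not_gt h0
      have hpT : p ∈ T := hp.1.2
      obtain ⟨q, hqc, hqd⟩ := Metric.mem_closure_iff.mp (hTc hpT) (r/3) (by linarith)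
      obtain ⟨s, hs1, hs2⟩ := exists_rat_btwn (show r/3 < r/2 by linarith)
      have hps : p ∈ Metric.ball q (s:ℝ) := by
        rw [Metric.mem_ball]
        exact lt_trans hqd hs1
      have hsub : Metric.ball q (s:ℝ) ⊆ Metric.ball p r := by
        intro y hy
        rw [Metric.mem_ball] at hy ⊢
        have hqp : dist q p < r/3 := by rw [dist_comm]; exact hqd
        calc dist y p ≤ dist y q + dist q p := dist_triangle _ _ _
          _ < (s:ℝ) + r/3 := by linarith
          _ < r/2 + r/2 := by linarith
          _ = r := by ring
      have hNBmem : (q, s) ∈ NB :=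
        ⟨hqc, lt_trans (by linarith : (0:ℝ) < r/3) hs1,
          measure_mono_null (Set.inter_subset_inter_right _ hsub) h0'⟩
      exact hp.2 (Set.mem_biUnion hNBmem hps)
    have hZ'inf : ∀ p ∈ Z', p ∈ Dinf := by
      intro p hp
      apply loc_pos μ Dn X Xn hXn hconv
      intro r hr
      have h1 : 0 < ν (Zt ∩ Metric.ball p r) := hloc p hp r hr
      have h2 : ν (Zt ∩ Metric.ball p r) ≤ ν (Metric.ball p r) :=
        measure_mono Set.inter_subset_right
      have h3 : ν (Metric.ball p r) = μ (X ⁻¹' Metric.ball p r) := by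
        rw [hν, Measure.map_apply hX measurableSet_ball]
      rw [h3] at h2
      exact lt_of_lt_of_le h1 h2
    have hXZ'pos : 0 < μ (X ⁻¹' Z') := by
      rw [← Measure.map_apply hX hZ'm]; exact hZ'pos
    obtain ⟨ω₀, hω₀⟩ := nonempty_of_measure_ne_zero hXZ'pos.ne'
    set x : 𝔻 := X ω₀ with hxdef
    have hxZ' : x ∈ Z' := hω₀
    have hxD0 : x ∈ D0 := hXD0 ω₀
    obtain ⟨xs, hxs, hxsx⟩ := hZ'inf x hxZ'
    have hxk : ∀ k : ℕ, ∃ p, p ∈ B k ∧ p ∈ Z' ∧ dist p x < 1/(k+1) := by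
      intro k
      have hrk : (0:ℝ) < 1/(k+1) := by positivity
      set W : Set 𝔻 := Z' ∩ Metric.ball x (1/(k+1)) with hW
      have hWm : MeasurableSet W := hZ'm.inter measurableSet_ball
      have hWZ : W ⊆ Z := fun p hp => hp.1.1.1
      have hWpos : 0 < ν W := by
        have h1 : 0 < ν (Zt ∩ Metric.ball x (1/(k+1))) := hloc x hxZ' _ hrk
        have h2 : Zt ∩ Metric.ball x (1/(k+1)) ⊆ W ∪ (Zt ∩ U) := by
          intro p hp
          by_cases hpU : p ∈ U
          · exact Or.inr ⟨hp.1, hpU⟩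
          · exact Or.inl ⟨⟨hp.1, hpU⟩, hp.2⟩
        have h3 : ν (Zt ∩ Metric.ball x (1/(k+1))) ≤ ν W + ν (Zt ∩ U) :=
          le_trans (measure_mono h2) (measure_union_le _ _)
        rw [hZtU, add_zero] at h3
        exact lt_of_lt_of_le h1 h3
      have hhull : ν (B k ∩ T ∩ W) = ν (H k ∩ W) :=
        (Measure.measure_toMeasurable_inter hWm (measure_ne_top ν _)).symm
      have hHkW : H k ∩ W = W :=
        Set.inter_eq_self_of_subset_right (fun p hp => hZsub k (hWZ hp))
      have hposBW : 0 < ν (B k ∩ T ∩ W) := by rw [hhull, hHkW]; exact hWpos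
      obtain ⟨p, hp1, hp2⟩ := nonempty_of_measure_ne_zero hposBW.ne'
      exact ⟨p, hp1.1, hp2.1, Metric.mem_ball.mp hp2.2⟩
    choose xk hxkB hxkZ' hxkd using hxk
    have hxkx : Tendsto xk atTop (𝓝 x) := by
      rw [tendsto_iff_dist_tendsto_zero]
      exact squeeze_zero (fun k => dist_nonneg) (fun k => (hxkd k).le)
        tendsto_one_div_add_atTop_nhds_zero_nat
    have hgxk : Tendsto (fun k => g (xk k)) atTop (𝓝 (g x)) :=
      key_cont D0 Dn gn g A hAne hAprop x hxD0 xs hxs hxsx xk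
        (fun k => (hxkB k).1) (fun k => hZ'inf _ (hxkZ' k)) hxkx
    have hwit := fun k => (hxkB k).2
    choose mf hmf zf hzf hzfd ωb hωbA hωbd using hwit
    set φ : ℕ → ℕ := fun i => Nat.rec 0 (fun _ prev => mf prev + 1) i with hφdef
    have hφsucc : ∀ i, φ (i+1) = mf (φ i) + 1 := fun i => rfl
    have hφmono : StrictMono φ := strictMono_nat_of_lt_succ (fun i => by
      rw [hφsucc]; exact Nat.lt_succ_of_le (hmf (φ i)))
    have hmφmono : StrictMono (fun i => mf (φ i)) := strictMono_nat_of_lt_succ (fun i => by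
      have h1 : mf (φ i) + 1 ≤ mf (φ (i+1)) := by rw [← hφsucc]; exact hmf (φ (i+1))
      omega)
    have h2to : Tendsto (fun i : ℕ => 2/((i:ℝ)+1)) atTop (𝓝 0) := by
      have h := tendsto_one_div_add_atTop_nhds_zero_nat.const_mul (2:ℝ)
      simpa [mul_one_div, div_eq_mul_inv] using h
    have hbound : ∀ i : ℕ, dist (zf (φ i)) x ≤ 2/((i:ℝ)+1) := by
      intro i
      have hfa : (1:ℝ)/((φ i : ℝ)+1) ≤ 1/((i:ℝ)+1) := frac_anti hφmono.le_apply
      have hd1 := (hzfd (φ i)).le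
      have hd2 := (hxkd (φ i)).le
      calc dist (zf (φ i)) x ≤ dist (zf (φ i)) (xk (φ i)) + dist (xk (φ i)) x :=
            dist_triangle _ _ _
        _ ≤ 1/((φ i:ℝ)+1) + 1/((φ i:ℝ)+1) := add_le_add hd1 hd2
        _ ≤ 1/((i:ℝ)+1) + 1/((i:ℝ)+1) := add_le_add hfa hfa
        _ = 2/((i:ℝ)+1) := by ring
    have hyx : Tendsto (fun i => zf (φ i)) atTop (𝓝 x) := by
      rw [tendsto_iff_dist_tendsto_zero]
      exact squeeze_zero (fun i => dist_nonneg) hbound h2to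
    obtain ⟨w, hw1, hw2, hw3⟩ := interleave_aux Dn xs hxs x hxsx _ hmφmono _
      (fun i => hzf (φ i)) hyx
    obtain ⟨N, hN⟩ := eventually_atTop.mp (hAprop w x hw1 hw2 hxD0 (ε/2) (by linarith))
    obtain ⟨K, hK⟩ := Metric.tendsto_atTop.mp hgxk (ε/2) (by linarith)
    set i := max N K with hi
    have hiN : N ≤ mf (φ i) := le_trans (le_max_left _ _)
      (le_trans hφmono.le_apply (hmf (φ i)))
    have hA1 : dist (gn (mf (φ i)) (ωb (φ i)) (w (mf (φ i)))) (g x) < ε/2 :=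
      hN _ hiN _ (hωbA (φ i))
    rw [hw3 i] at hA1
    have hiK : K ≤ φ i := le_trans (le_max_right _ _) hφmono.le_apply
    have hA2 : dist (g (xk (φ i))) (g x) < ε/2 := hK _ hiK
    have hA3 : ε ≤ dist (gn (mf (φ i)) (ωb (φ i)) (zf (φ i))) (g (xk (φ i))) := hωbd (φ i)
    have hcontra : ε < ε := by
      calc ε ≤ dist (gn (mf (φ i)) (ωb (φ i)) (zf (φ i))) (g (xk (φ i))) := hA3
        _ ≤ dist (gn (mf (φ i)) (ωb (φ i)) (zf (φ i))) (g x) + dist (g x) (g (xk (φ i))) :=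
            dist_triangle _ _ _
        _ < ε/2 + ε/2 := by rw [dist_comm (g x)]; exact add_lt_add hA1 hA2
        _ = ε := by ring
    exact lt_irrefl ε hcontra
  have htendν : Tendsto (fun k => ν (H' k)) atTop (𝓝 0) := by
    have h := tendsto_measure_iInter_atTop (μ := ν)
      (fun k => (hH'm k).nullMeasurableSet) hH'anti ⟨0, measure_ne_top _ _⟩
    rw [hZH', hZ0] at h
    exact h
  obtain ⟨k₀, hk₀⟩ := (htendν.eventually_lt_const ha0).exists
  have hck := (hconv (1/(k₀+1)) (by positivity)).eventually_lt_const ha0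
  filter_upwards [hck, eventually_ge_atTop k₀] with n hn1 hn2
  have hsub : {ω | ε ≤ dist (gn n ω (Xn n ω)) (g (X ω))} ⊆
      Aᶜ ∪ {ω | 1/((k₀:ℝ)+1) ≤ dist (Xn n ω) (X ω)} ∪ X ⁻¹' (H' k₀) := by
    intro ω hω
    by_cases hA' : ω ∈ A
    · by_cases hd : 1/((k₀:ℝ)+1) ≤ dist (Xn n ω) (X ω)
      · exact Or.inl (Or.inr hd)
      · refine Or.inr ?_
        have hBmem : X ω ∈ B k₀ ∩ T :=
          ⟨⟨hXD0 ω, n, hn2, Xn n ω, hXn n ω, not_le.mp hd, ω, hA', hω⟩, hXT ω⟩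
        exact Set.mem_iInter₂.mpr fun j hj => hBH j k₀ (Set.mem_Iic.mp hj) hBmem
    · exact Or.inl (Or.inl hA')
  have hmap : μ (X ⁻¹' (H' k₀)) = ν (H' k₀) := (Measure.map_apply hX (hH'm k₀)).symm
  calc μ {ω | ε ≤ dist (gn n ω (Xn n ω)) (g (X ω))}
      ≤ μ (Aᶜ ∪ {ω | 1/((k₀:ℝ)+1) ≤ dist (Xn n ω) (X ω)} ∪ X ⁻¹' (H' k₀)) :=
        measure_mono hsub
    _ ≤ μ Aᶜ + μ {ω | 1/((k₀:ℝ)+1) ≤ dist (Xn n ω) (X ω)} + μ (X ⁻¹' (H' k₀)) :=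
        le_trans (measure_union_le _ _) (add_le_add (measure_union_le _ _) le_rfl)
    _ ≤ a + a + a := by
        refine add_le_add (add_le_add hAc hn1.le) ?_
        rw [hmap]; exact hk₀.le
    _ ≤ η/3 + η/3 + η/3 := add_le_add (add_le_add haη haη) haη
    _ = η := ENNReal.add_thirds η
end

section
/- Let U, V ~ Unif(0,1), Y_d ~ Unif(d, d+1) for d ∈ {0,1,2}, all mutually independent. Let Z = 1{U ≤ 0.5}, D₀ = 2·1{V ≤ 0.1} + 1{0.1 < V ≤ 0.5}, D₁ = 2·1{V ≤ 0.5} + 1{0.5 < V ≤ 0.6}, D = Σ_{z} 1{Z=z}·D_z, and Y = Σ_d 1{D=d}·Y_d. Then ℙ(Y ∈ [1,2], D ≥ 1 | Z = 1) − ℙ(Y ∈ [1,2], D ≥ 1 | Z = 0) = ℙ(D₀ = 0, D₁ = 1) − ℙ(D₀ = 1, D₁ = 2) < 0 (indeed it equals 0.1 − 0.4 = −0.3). -/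
open MeasureTheory ProbabilityTheory

lemma aux_map_restrict_mem {Ω : Type*} [MeasurableSpace Ω] (μ : Measure Ω)
    {X : Ω → ℝ} (hX : Measurable X) {a b : ℝ}
    (hXd : μ.map X = volume.restrict (Set.Ioo a b)) :
    ∀ᵐ ω ∂μ, X ω ∈ Set.Ioo a b := by
  rw [ae_iff]
  have : {ω | ¬ X ω ∈ Set.Ioo a b} = X ⁻¹' (Set.Ioo a b)ᶜ := rfl
  rw [this, ← Measure.map_apply hX measurableSet_Ioo.compl, hXd,
    Measure.restrict_apply measurableSet_Ioo.compl]
  simp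

lemma aux_measure_preimage {Ω : Type*} [MeasurableSpace Ω] (μ : Measure Ω)
    {X : Ω → ℝ} (hX : Measurable X) {a b : ℝ}
    (hXd : μ.map X = volume.restrict (Set.Ioo a b)) {s : Set ℝ}
    (hs : MeasurableSet s) :
    μ (X ⁻¹' s) = volume (s ∩ Set.Ioo a b) := by
  rw [← Measure.map_apply hX hs, hXd, Measure.restrict_apply hs]

/-- A valid instrument for a multivalued treatment need not remain valid after
coarsening: with `U, V ~ Unif(0,1)`, `Y_d ~ Unif(d,d+1)` mutually independent,
`Z = 1{U ≤ 1/2}`, `D₀ = 2·1{V ≤ 0.1} + 1{0.1 < V ≤ 0.5}`,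
`D₁ = 2·1{V ≤ 0.5} + 1{0.5 < V ≤ 0.6}`, `D = Σ_z 1{Z=z}·D_z`,
`Y = Σ_d 1{D=d}·Y_d`, one has
`ℙ(Y ∈ [1,2], D ≥ 1 | Z=1) − ℙ(Y ∈ [1,2], D ≥ 1 | Z=0)
  = ℙ(D₀=0, D₁=1) − ℙ(D₀=1, D₁=2) = 0.1 − 0.4 = −0.3 < 0`. -/
theorem stmt14
    {Ω : Type*} [MeasurableSpace Ω] (μ : Measure Ω) [IsProbabilityMeasure μ]
    (U V Y0 Y1 Y2 : Ω → ℝ)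
    (hU : Measurable U) (hV : Measurable V)
    (hY0 : Measurable Y0) (hY1 : Measurable Y1) (hY2 : Measurable Y2)
    (hindep : iIndepFun ![U, V, Y0, Y1, Y2] μ)
    (hUd : μ.map U = volume.restrict (Set.Ioo (0 : ℝ) 1))
    (hVd : μ.map V = volume.restrict (Set.Ioo (0 : ℝ) 1))
    (hY0d : μ.map Y0 = volume.restrict (Set.Ioo (0 : ℝ) 1))
    (hY1d : μ.map Y1 = volume.restrict (Set.Ioo (1 : ℝ) 2))
    (hY2d : μ.map Y2 = volume.restrict (Set.Ioo (2 : ℝ) 3)) :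
    let Z : Ω → ℝ := fun ω => if U ω ≤ 1 / 2 then 1 else 0
    let D0 : Ω → ℝ := fun ω => if V ω ≤ 1 / 10 then 2 else if V ω ≤ 1 / 2 then 1 else 0
    let D1 : Ω → ℝ := fun ω => if V ω ≤ 1 / 2 then 2 else if V ω ≤ 3 / 5 then 1 else 0
    let D : Ω → ℝ := fun ω => if Z ω = 1 then D1 ω else D0 ω
    let Y : Ω → ℝ := fun ω =>
      if D ω = 0 then Y0 ω else if D ω = 1 then Y1 ω else Y2 ω
    ((μ[|Z ⁻¹' {1}] {ω | Y ω ∈ Set.Icc (1 : ℝ) 2 ∧ 1 ≤ D ω}).toReal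
        - (μ[|Z ⁻¹' {0}] {ω | Y ω ∈ Set.Icc (1 : ℝ) 2 ∧ 1 ≤ D ω}).toReal
      = (μ {ω | D0 ω = 0 ∧ D1 ω = 1}).toReal - (μ {ω | D0 ω = 1 ∧ D1 ω = 2}).toReal) ∧
    ((μ[|Z ⁻¹' {1}] {ω | Y ω ∈ Set.Icc (1 : ℝ) 2 ∧ 1 ≤ D ω}).toReal
        - (μ[|Z ⁻¹' {0}] {ω | Y ω ∈ Set.Icc (1 : ℝ) 2 ∧ 1 ≤ D ω}).toReal
      = -(3 / 10)) := by
  intro Z D0 D1 D Y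
  -- independence of U and V
  have hUV : IndepFun U V μ := by
    have := hindep.indepFun (show (0 : Fin 5) ≠ 1 by decide)
    simpa using this
  -- a.s. facts
  have hae1 : ∀ᵐ ω ∂μ, Y1 ω ∈ Set.Ioo (1:ℝ) 2 := aux_map_restrict_mem μ hY1 hY1d
  have hae2 : ∀ᵐ ω ∂μ, Y2 ω ∈ Set.Ioo (2:ℝ) 3 := aux_map_restrict_mem μ hY2 hY2d
  -- preimage descriptions
  have hZ1 : Z ⁻¹' {1} = U ⁻¹' Set.Iic (1/2) := by
    ext ω; simp only [Z, Set.mem_preimage, Set.mem_singleton_iff, Set.mem_Iic]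
    split_ifs with h
    · exact iff_of_true rfl h
    · exact iff_of_false (by norm_num) h
  have hZ0 : Z ⁻¹' {0} = U ⁻¹' (Set.Ioi (1/2)) := by
    ext ω; simp only [Z, Set.mem_preimage, Set.mem_singleton_iff, Set.mem_Ioi]
    split_ifs with h
    · exact iff_of_false (by norm_num) (not_lt.mpr h)
    · exact iff_of_true rfl (lt_of_not_ge h)
  set E : Set Ω := {ω | Y ω ∈ Set.Icc (1 : ℝ) 2 ∧ 1 ≤ D ω} with hE
  -- event on Z = 1
  have key1 : (Z ⁻¹' {1} ∩ E : Set Ω) =ᵐ[μ] ((U ⁻¹' Set.Iic (1/2) ∩ V ⁻¹' Set.Ioc (1/2) (3/5) : Set Ω)) := by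
    rw [Filter.eventuallyEq_set]
    filter_upwards [hae1, hae2] with ω h1 h2
    simp only [hZ1, Set.mem_inter_iff, Set.mem_preimage, Set.mem_Iic, Set.mem_Ioc, hE,
      Set.mem_setOf_eq, Set.mem_Icc]
    obtain ⟨h1a, h1b⟩ := h1; obtain ⟨h2a, h2b⟩ := h2
    constructor
    · rintro ⟨hu, hY, hD⟩
      refine ⟨hu, ?_⟩
      by_cases hv1 : V ω ≤ 1/2
      · exfalso
        have hd : D ω = 2 := by norm_num [D, Z, D1, hu, hv1]
        have hy : Y ω = Y2 ω := by norm_num [Y, hd]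
        rw [hy] at hY; linarith [hY.2]
      · by_cases hv2 : V ω ≤ 3/5
        · exact ⟨lt_of_not_ge hv1, hv2⟩
        · exfalso
          have hd : D ω = 0 := by norm_num [D, Z, D1, hu, hv1, hv2]
          rw [hd] at hD; linarith
    · rintro ⟨hu, hv1, hv2⟩
      have hd : D ω = 1 := by norm_num [D, Z, D1, hu, not_le.mpr hv1, hv2]
      have hy : Y ω = Y1 ω := by norm_num [Y, hd]
      exact ⟨hu, by rw [hy]; exact ⟨le_of_lt h1a, le_of_lt h1b⟩, by rw [hd]⟩
  have key0 : (Z ⁻¹' {0} ∩ E : Set Ω) =ᵐ[μ] ((U ⁻¹' Set.Ioi (1/2) ∩ V ⁻¹' Set.Ioc (1/10) (1/2) : Set Ω)) := by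
    rw [Filter.eventuallyEq_set]
    filter_upwards [hae1, hae2] with ω h1 h2
    simp only [hZ0, Set.mem_inter_iff, Set.mem_preimage, Set.mem_Ioi, Set.mem_Ioc, hE,
      Set.mem_setOf_eq, Set.mem_Icc]
    obtain ⟨h1a, h1b⟩ := h1; obtain ⟨h2a, h2b⟩ := h2
    constructor
    · rintro ⟨hu, hY, hD⟩
      have hu' : ¬ U ω ≤ 1/2 := not_le.mpr hu
      refine ⟨hu, ?_⟩
      by_cases hv1 : V ω ≤ 1/10
      · exfalso
        have hd : D ω = 2 := by norm_num [D, Z, D0, hu', hv1]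
        have hy : Y ω = Y2 ω := by norm_num [Y, hd]
        rw [hy] at hY; linarith [hY.2]
      · by_cases hv2 : V ω ≤ 1/2
        · exact ⟨lt_of_not_ge hv1, hv2⟩
        · exfalso
          have hd : D ω = 0 := by norm_num [D, Z, D0, hu', hv1, hv2]
          rw [hd] at hD; linarith
    · rintro ⟨hu, hv1, hv2⟩
      have hu' : ¬ U ω ≤ 1/2 := not_le.mpr hu
      have hd : D ω = 1 := by norm_num [D, Z, D0, hu', not_le.mpr hv1, hv2]
      have hy : Y ω = Y1 ω := by norm_num [Y, hd]
      exact ⟨hu, by rw [hy]; exact ⟨le_of_lt h1a, le_of_lt h1b⟩, by rw [hd]⟩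
  -- measures of the basic rectangles
  have hmU1 : μ (U ⁻¹' Set.Iic (1/2)) = ENNReal.ofReal (1/2) := by
    rw [aux_measure_preimage μ hU hUd measurableSet_Iic]
    have : Set.Iic (1/2 : ℝ) ∩ Set.Ioo 0 1 = Set.Ioc 0 (1/2) := by
      ext x; simp only [Set.mem_inter_iff, Set.mem_Iic, Set.mem_Ioo, Set.mem_Ioc]
      constructor
      · rintro ⟨h1, h2, h3⟩; exact ⟨h2, h1⟩
      · rintro ⟨h1, h2⟩; exact ⟨h2, h1, by linarith⟩
    rw [this, Real.volume_Ioc]; norm_num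
  have hmU0 : μ (U ⁻¹' Set.Ioi (1/2)) = ENNReal.ofReal (1/2) := by
    rw [aux_measure_preimage μ hU hUd measurableSet_Ioi]
    have : Set.Ioi (1/2 : ℝ) ∩ Set.Ioo 0 1 = Set.Ioo (1/2) 1 := by
      ext x; simp only [Set.mem_inter_iff, Set.mem_Ioi, Set.mem_Ioo]
      constructor <;> intro h
      · exact ⟨h.1, h.2.2⟩
      · exact ⟨h.1, by linarith [h.1], h.2⟩
    rw [this, Real.volume_Ioo]; norm_num
  have hmV1 : μ (V ⁻¹' Set.Ioc (1/2) (3/5)) = ENNReal.ofReal (1/10) := by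
    rw [aux_measure_preimage μ hV hVd measurableSet_Ioc]
    have : Set.Ioc (1/2 : ℝ) (3/5) ∩ Set.Ioo 0 1 = Set.Ioc (1/2) (3/5) := by
      apply Set.inter_eq_left.mpr
      intro x hx; simp only [Set.mem_Ioc] at hx; exact ⟨by linarith [hx.1], by linarith [hx.2]⟩
    rw [this, Real.volume_Ioc]; norm_num
  have hmV0 : μ (V ⁻¹' Set.Ioc (1/10) (1/2)) = ENNReal.ofReal (2/5) := by
    rw [aux_measure_preimage μ hV hVd measurableSet_Ioc]
    have : Set.Ioc (1/10 : ℝ) (1/2) ∩ Set.Ioo 0 1 = Set.Ioc (1/10) (1/2) := by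
      apply Set.inter_eq_left.mpr
      intro x hx; simp only [Set.mem_Ioc] at hx; exact ⟨by linarith [hx.1], by linarith [hx.2]⟩
    rw [this, Real.volume_Ioc]; norm_num
  -- conditional probabilities
  have hc1 : μ[|Z ⁻¹' {1}] E = ENNReal.ofReal (1/10) := by
    rw [hZ1] at key1
    rw [hZ1, cond_apply (hU measurableSet_Iic), measure_congr key1,
      hUV.measure_inter_preimage_eq_mul _ _ measurableSet_Iic measurableSet_Ioc,
      hmU1, hmV1]
    rw [← ENNReal.ofReal_inv_of_pos (by norm_num), ← ENNReal.ofReal_mul (by norm_num),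
      ← ENNReal.ofReal_mul (by norm_num)]
    norm_num
  have hc0 : μ[|Z ⁻¹' {0}] E = ENNReal.ofReal (2/5) := by
    rw [hZ0] at key0
    rw [hZ0, cond_apply (hU measurableSet_Ioi), measure_congr key0,
      hUV.measure_inter_preimage_eq_mul _ _ measurableSet_Ioi measurableSet_Ioc,
      hmU0, hmV0]
    rw [← ENNReal.ofReal_inv_of_pos (by norm_num), ← ENNReal.ofReal_mul (by norm_num),
      ← ENNReal.ofReal_mul (by norm_num)]
    norm_num
  -- right-hand side sets
  have hR1 : {ω | D0 ω = 0 ∧ D1 ω = 1} = V ⁻¹' Set.Ioc (1/2) (3/5) := by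
    ext ω; simp only [Set.mem_setOf_eq, Set.mem_preimage, Set.mem_Ioc, D0, D1]
    split_ifs <;> constructor <;> intro h <;>
      first | (constructor <;> first | linarith | norm_num at *) | norm_num at * | (exact ⟨by linarith [h.1], by linarith [h.2]⟩)
  have hR0 : {ω | D0 ω = 1 ∧ D1 ω = 2} = V ⁻¹' Set.Ioc (1/10) (1/2) := by
    ext ω; simp only [Set.mem_setOf_eq, Set.mem_preimage, Set.mem_Ioc, D0, D1]
    split_ifs <;> constructor <;> intro h <;>
      first | (constructor <;> first | linarith | norm_num at *) | norm_num at * | (exact ⟨by linarith [h.1], by linarith [h.2]⟩)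
  rw [hc1, hc0, hR1, hR0, hmV1, hmV0]
  have e1 : (ENNReal.ofReal (1/10 : ℝ)).toReal = 1/10 := ENNReal.toReal_ofReal (by norm_num)
  have e2 : (ENNReal.ofReal (2/5 : ℝ)).toReal = 2/5 := ENNReal.toReal_ofReal (by norm_num)
  rw [e1, e2]
  norm_num
end
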